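/- (Theorem 3) Let π : Fin r × Fin r → ℝ with π(i,j) > 0. Suppose (DPS) there exist d such that π(i,j)/π(j,i) = d(j-i) for all i < j, and (DGS) for each k ∈ {1,...,r-1}, ∑_{j-i=k} π(i,j) = ∑_{i-j=k} π(i,j). Then π(i,j) = π(j,i) for all i, j (the symmetry model S holds). -/

import Mathlib

/-- Theorem 3: if the DPS model and the DGS model both hold,
then the symmetry model S holds. -/
theorem stmt_8 (r : ℕ) (hr : 2 ≤ r) (π : Fin r × Fin r → ℝ)
    (hpos : ∀ p, 0 < π p)
    (hDPS : ∃ d : ℕ → ℝ, ∀ i j : Fin r, i < j →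
        π (i, j) / π (j, i) = d ((j : ℕ) - (i : ℕ)))
    (hDGS : ∀ k : ℕ, 1 ≤ k → k ≤ r - 1 →
        (∑ p : Fin r × Fin r, if (p.2 : ℕ) = (p.1 : ℕ) + k then π p else 0) =
        (∑ p : Fin r × Fin r, if (p.1 : ℕ) = (p.2 : ℕ) + k then π p else 0)) :
    ∀ i j : Fin r, π (i, j) = π (j, i) := by
  obtain ⟨d, hd⟩ := hDPS
  have key : ∀ k : ℕ, 1 ≤ k → k ≤ r - 1 → d k = 1 := by
    intro k hk1 hk2
    have hkr : k < r := by omega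
    have h1 : (∑ p : Fin r × Fin r, if (p.2 : ℕ) = (p.1 : ℕ) + k then π p else 0)
        = ∑ p : Fin r × Fin r, if (p.1 : ℕ) = (p.2 : ℕ) + k then π (p.2, p.1) else 0 := by
      apply Fintype.sum_equiv (Equiv.prodComm (Fin r) (Fin r))
      intro p
      rfl
    have h2 : (∑ p : Fin r × Fin r, if (p.1 : ℕ) = (p.2 : ℕ) + k then π (p.2, p.1) else 0)
        = d k * ∑ p : Fin r × Fin r, if (p.1 : ℕ) = (p.2 : ℕ) + k then π p else 0 := by
      rw [Finset.mul_sum]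
      apply Finset.sum_congr rfl
      intro p _
      by_cases h : (p.1 : ℕ) = (p.2 : ℕ) + k
      · simp only [h, if_pos]
        have hlt : p.2 < p.1 := by
          have : (p.2 : ℕ) < (p.1 : ℕ) := by omega
          exact this
        have := hd p.2 p.1 hlt
        have hkk : (p.1 : ℕ) - (p.2 : ℕ) = k := by omega
        rw [hkk] at this
        have hne : π (p.1, p.2) ≠ 0 := ne_of_gt (hpos _)
        field_simp at this
        exact this.trans (mul_comm _ _)
      · simp [h]
    have hpos' : 0 < ∑ p : Fin r × Fin r, if (p.1 : ℕ) = (p.2 : ℕ) + k then π p else 0 := by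
      apply Finset.sum_pos'
      · intro p _
        by_cases h : (p.1 : ℕ) = (p.2 : ℕ) + k
        · simp [h, le_of_lt (hpos _)]
        · simp [h]
      · refine ⟨(⟨k, hkr⟩, ⟨0, by omega⟩), Finset.mem_univ _, ?_⟩
        simp [hpos]
    have := hDGS k hk1 hk2
    rw [h1, h2] at this
    have h3 : d k * (∑ p : Fin r × Fin r, if (p.1 : ℕ) = (p.2 : ℕ) + k then π p else 0)
        = 1 * ∑ p : Fin r × Fin r, if (p.1 : ℕ) = (p.2 : ℕ) + k then π p else 0 := by
      rw [one_mul]; exact this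
    exact mul_right_cancel₀ (ne_of_gt hpos') h3
  intro i j
  rcases lt_trichotomy i j with h | h | h
  · have hk1 : 1 ≤ (j : ℕ) - (i : ℕ) := by
      have : (i : ℕ) < j := h
      omega
    have hk2 : (j : ℕ) - (i : ℕ) ≤ r - 1 := by
      have := j.isLt
      omega
    have := hd i j h
    rw [key _ hk1 hk2] at this
    have hne : π (j, i) ≠ 0 := ne_of_gt (hpos _)
    field_simp at this
    exact this
  · rw [h]
  · have hk1 : 1 ≤ (i : ℕ) - (j : ℕ) := by
      have : (j : ℕ) < i := h
      omega
    have hk2 : (i : ℕ) - (j : ℕ) ≤ r - 1 := by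
      have := i.isLt
      omega
    have := hd j i h
    rw [key _ hk1 hk2] at this
    have hne : π (i, j) ≠ 0 := ne_of_gt (hpos _)
    field_simp at this
    exact this.symm
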